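/- Let G be a graph, B, C ⊆ V(G) with C ⊆ B, and let uv be an edge of G with {u,v} ⊆ C. Then γ_g(G_{uv}|B) ≤ γ_g(G|C) and γ_g′(G_{uv}|B) ≤ γ_g′(G|C). -/
import Mathlib


open Finset

namespace DomGame

open scoped Classical

noncomputable section

variable {V : Type*}

/-- The closed neighborhood of `x` in `G`, as a `Finset`. -/
def closedNbr (G : SimpleGraph V) [Fintype V] (x : V) : Finset V :=
  Finset.univ.filter (fun y => y = x ∨ G.Adj x y)

lemma card_compl_lt (G : SimpleGraph V) [Fintype V] {S : Finset V} {x : V}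
    (h : ¬ closedNbr G x ⊆ S) :
    (Finset.univ \ (S ∪ closedNbr G x)).card < (Finset.univ \ S).card := by
  obtain ⟨v, hvN, hvS⟩ := Finset.not_subset.mp h
  apply Finset.card_lt_card
  have hsub : Finset.univ \ (S ∪ closedNbr G x) ⊆ Finset.univ \ S := by
    intro y hy
    simp only [Finset.mem_sdiff, Finset.mem_univ, Finset.mem_union, true_and, not_or] at hy ⊢
    exact hy.1
  exact (Finset.ssubset_iff_of_subset hsub).mpr ⟨v, by simp [hvS], by simp [hvN]⟩

/-- The value of the (partially dominated) domination game on `G|S`, with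
`dom = true` meaning Dominator moves next, `dom = false` meaning Staller moves next.
A legal move is a vertex whose closed neighborhood contains a yet undominated vertex;
Dominator minimizes, Staller maximizes the total number of moves. -/
def gameVal (G : SimpleGraph V) [Fintype V] (dom : Bool) (S : Finset V) : ℕ :=
  let moves := Finset.univ.filter (fun x => ¬ closedNbr G x ⊆ S)
  if h : moves.Nonempty then
    if dom then
      moves.attach.inf' (by simpa using h)
        (fun x => 1 + gameVal G false (S ∪ closedNbr G x.1))
    else
      moves.attach.sup' (by simpa using h)
        (fun x => 1 + gameVal G true (S ∪ closedNbr G x.1))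
  else 0
termination_by (Finset.univ \ S).card
decreasing_by
  · exact card_compl_lt G (by simpa using (Finset.mem_filter.mp x.2).2)
  · exact card_compl_lt G (by simpa using (Finset.mem_filter.mp x.2).2)

/-- The D-game domination number `γ_g(G)`. -/
def gammaD (G : SimpleGraph V) [Fintype V] : ℕ := gameVal G true ∅

/-- The S-game domination number `γ_g'(G)`. -/
def gammaS (G : SimpleGraph V) [Fintype V] : ℕ := gameVal G false ∅

/-- Value of the Staller-pass domination game on `G|S`: Staller may skip
(at most) one move during the game; the skipped turn is not counted.
`dom` tells whose turn it is, `canPass` whether Staller's pass is still available. -/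
def spVal (G : SimpleGraph V) [Fintype V] (dom : Bool) (canPass : Bool) (S : Finset V) : ℕ :=
  let moves := Finset.univ.filter (fun x => ¬ closedNbr G x ⊆ S)
  if h : moves.Nonempty then
    if dom then
      moves.attach.inf' (by simpa using h)
        (fun x => 1 + spVal G false canPass (S ∪ closedNbr G x.1))
    else
      if hc : canPass then
        max (moves.attach.sup' (by simpa using h)
              (fun x => 1 + spVal G true canPass (S ∪ closedNbr G x.1)))
            (spVal G true false S)
      else
        moves.attach.sup' (by simpa using h)
          (fun x => 1 + spVal G true canPass (S ∪ closedNbr G x.1))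
  else 0
termination_by ((Finset.univ \ S).card, if canPass then 1 else 0)
decreasing_by
  · exact Prod.Lex.left _ _ (card_compl_lt G (by simpa using (Finset.mem_filter.mp x.2).2))
  · exact Prod.Lex.left _ _ (card_compl_lt G (by simpa using (Finset.mem_filter.mp x.2).2))
  · simp only [hc, if_true]
    exact Prod.Lex.right _ (by norm_num)
  · exact Prod.Lex.left _ _ (card_compl_lt G (by simpa using (Finset.mem_filter.mp x.2).2))

/-- Value of the Dominator-pass domination game on `G|S`: Dominator may skip
(at most) one move during the game; the skipped turn is not counted. -/
def dpVal (G : SimpleGraph V) [Fintype V] (dom : Bool) (canPass : Bool) (S : Finset V) : ℕ :=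
  let moves := Finset.univ.filter (fun x => ¬ closedNbr G x ⊆ S)
  if h : moves.Nonempty then
    if dom then
      if hc : canPass then
        min (moves.attach.inf' (by simpa using h)
              (fun x => 1 + dpVal G false canPass (S ∪ closedNbr G x.1)))
            (dpVal G false false S)
      else
        moves.attach.inf' (by simpa using h)
          (fun x => 1 + dpVal G false canPass (S ∪ closedNbr G x.1))
    else
      moves.attach.sup' (by simpa using h)
        (fun x => 1 + dpVal G true canPass (S ∪ closedNbr G x.1))
  else 0
termination_by ((Finset.univ \ S).card, if canPass then 1 else 0)
decreasing_by
  · exact Prod.Lex.left _ _ (card_compl_lt G (by simpa using (Finset.mem_filter.mp x.2).2))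
  · simp only [hc, if_true]
    exact Prod.Lex.right _ (by norm_num)
  · exact Prod.Lex.left _ _ (card_compl_lt G (by simpa using (Finset.mem_filter.mp x.2).2))
  · exact Prod.Lex.left _ _ (card_compl_lt G (by simpa using (Finset.mem_filter.mp x.2).2))

/-- The graph `G_{uv}`: obtained from `G - uv` by adding two new vertices
`u' = Sum.inr false` and `v' = Sum.inr true` together with the edges `u v'` and `v u'`. -/
def cutGraph (G : SimpleGraph V) (u v : V) : SimpleGraph (V ⊕ Bool) :=
  SimpleGraph.fromRel (fun x y =>
    match x, y with
    | Sum.inl a, Sum.inl b => G.Adj a b ∧ ¬ (a = u ∧ b = v) ∧ ¬ (a = v ∧ b = u)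
    | Sum.inl a, Sum.inr b => (b = false ∧ a = v) ∨ (b = true ∧ a = u)
    | _, _ => False)

/-- The set of vertices of `G_{uv}` declared dominated, given that `B ⊆ V(G)` is
declared dominated: `B` together with the two new vertices `u'` and `v'`. -/
def cutDom [DecidableEq V] (B : Finset V) : Finset (V ⊕ Bool) :=
  B.image Sum.inl ∪ {Sum.inr false, Sum.inr true}

/-- Disjoint union of two simple graphs. -/
def disjUnion {α β : Type*} (G : SimpleGraph α) (H : SimpleGraph β) :
    SimpleGraph (α ⊕ β) :=
  SimpleGraph.fromRel (fun x y =>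
    match x, y with
    | Sum.inl a, Sum.inl b => G.Adj a b
    | Sum.inr a, Sum.inr b => H.Adj a b
    | _, _ => False)

/-- The disjoint union of `k` paths, the `i`-th on `size i` vertices
(consecutive vertices of each `Fin (size i)` being adjacent). -/
def sigmaPathGraph (k : ℕ) (size : Fin k → ℕ) :
    SimpleGraph (Σ i : Fin k, Fin (size i)) :=
  SimpleGraph.fromRel (fun x y => x.1 = y.1 ∧ x.2.val + 1 = y.2.val)

/-- Vertex set of the three-legged spider `T_{p,q,r}`:
the center together with three legs on `4p`, `4q` and `4r` vertices. -/
abbrev SpiderV (p q r : ℕ) := Unit ⊕ (Fin (4*p) ⊕ (Fin (4*q) ⊕ Fin (4*r)))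

/-- The three-legged spider `T_{p,q,r}`, obtained from paths `P_{4p+1}`, `P_{4q+1}`,
`P_{4r+1}` by identifying one end-vertex of each into the center. In each leg,
vertex `0` is adjacent to the center, and vertices `i`, `i+1` are adjacent. -/
def spider (p q r : ℕ) : SimpleGraph (SpiderV p q r) :=
  SimpleGraph.fromRel (fun x y =>
    match x, y with
    | Sum.inl _, Sum.inr (Sum.inl i) => i.val = 0
    | Sum.inl _, Sum.inr (Sum.inr (Sum.inl i)) => i.val = 0
    | Sum.inl _, Sum.inr (Sum.inr (Sum.inr i)) => i.val = 0
    | Sum.inr (Sum.inl i), Sum.inr (Sum.inl j) => i.val + 1 = j.val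
    | Sum.inr (Sum.inr (Sum.inl i)), Sum.inr (Sum.inr (Sum.inl j)) => i.val + 1 = j.val
    | Sum.inr (Sum.inr (Sum.inr i)), Sum.inr (Sum.inr (Sum.inr j)) => i.val + 1 = j.val
    | _, _ => False)

/-- The weight `w(P'_{4q+r}) = w(P''_{4q+r}) = 2q + c_r` with
`c_0 = 0`, `c_1 = 1`, `c_2 = 3/2`, `c_3 = 7/4`, as a function of `n = 4q + r`. -/
def pathWeight (n : ℕ) : ℚ :=
  2 * (n / 4 : ℕ) +
    (if n % 4 = 0 then 0 else if n % 4 = 1 then 1 else if n % 4 = 2 then 3/2 else 7/4)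


section Helpers

lemma mem_closedNbr {G : SimpleGraph V} [Fintype V] {x y : V} :
    y ∈ closedNbr G x ↔ y = x ∨ G.Adj x y := by
  simp [closedNbr]

lemma gameVal_eq (G : SimpleGraph V) [Fintype V] (dom : Bool) (S : Finset V) :
    gameVal G dom S =
      if h : (Finset.univ.filter (fun x => ¬ closedNbr G x ⊆ S)).Nonempty then
        if dom then
          (Finset.univ.filter (fun x => ¬ closedNbr G x ⊆ S)).attach.inf' (by simpa using h)
            (fun x => 1 + gameVal G false (S ∪ closedNbr G x.1))
        else
          (Finset.univ.filter (fun x => ¬ closedNbr G x ⊆ S)).attach.sup' (by simpa using h)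
            (fun x => 1 + gameVal G true (S ∪ closedNbr G x.1))
      else 0 := by
  rw [gameVal]

lemma gameVal_of_empty {G : SimpleGraph V} [Fintype V] {S : Finset V}
    (h : ∀ x : V, closedNbr G x ⊆ S) (b : Bool) : gameVal G b S = 0 := by
  rw [gameVal_eq G b S]
  rw [dif_neg]
  simp only [Finset.not_nonempty_iff_eq_empty, Finset.filter_eq_empty_iff]
  intro x _
  simpa using h x

lemma gameVal_true_le {G : SimpleGraph V} [Fintype V] {S : Finset V} {x : V}
    (hx : ¬ closedNbr G x ⊆ S) :
    gameVal G true S ≤ 1 + gameVal G false (S ∪ closedNbr G x) := by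
  have hmem : x ∈ Finset.univ.filter (fun x => ¬ closedNbr G x ⊆ S) := by
    simp [hx]
  rw [gameVal_eq G true S, dif_pos ⟨x, hmem⟩, if_pos rfl]
  exact Finset.inf'_le _ (Finset.mem_attach _ ⟨x, hmem⟩)

lemma le_gameVal_false {G : SimpleGraph V} [Fintype V] {S : Finset V} {x : V}
    (hx : ¬ closedNbr G x ⊆ S) :
    1 + gameVal G true (S ∪ closedNbr G x) ≤ gameVal G false S := by
  have hmem : x ∈ Finset.univ.filter (fun x => ¬ closedNbr G x ⊆ S) := by
    simp [hx]
  rw [gameVal_eq G false S, dif_pos ⟨x, hmem⟩, if_neg (by simp)]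
  exact Finset.le_sup' (fun x => 1 + gameVal G true (S ∪ closedNbr G x.1))
    (Finset.mem_attach _ ⟨x, hmem⟩)

lemma gameVal_true_exists {G : SimpleGraph V} [Fintype V] {S : Finset V}
    (h : ∃ x : V, ¬ closedNbr G x ⊆ S) :
    ∃ x : V, (¬ closedNbr G x ⊆ S) ∧
      gameVal G true S = 1 + gameVal G false (S ∪ closedNbr G x) := by
  have h' : (Finset.univ.filter (fun x => ¬ closedNbr G x ⊆ S)).Nonempty := by
    obtain ⟨x, hx⟩ := h
    exact ⟨x, by simp [hx]⟩
  rw [gameVal_eq G true S, dif_pos h', if_pos rfl]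
  obtain ⟨b, _, hb⟩ := Finset.exists_mem_eq_inf'
    (s := (Finset.univ.filter (fun x => ¬ closedNbr G x ⊆ S)).attach) (by simpa using h')
    (fun x => 1 + gameVal G false (S ∪ closedNbr G x.1))
  exact ⟨b.1, by simpa using (Finset.mem_filter.mp b.2).2, hb⟩

lemma gameVal_false_le {G : SimpleGraph V} [Fintype V] {S : Finset V} {K : ℕ}
    (h : ∃ x : V, ¬ closedNbr G x ⊆ S)
    (hb : ∀ x : V, ¬ closedNbr G x ⊆ S → 1 + gameVal G true (S ∪ closedNbr G x) ≤ K) :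
    gameVal G false S ≤ K := by
  have h' : (Finset.univ.filter (fun x => ¬ closedNbr G x ⊆ S)).Nonempty := by
    obtain ⟨x, hx⟩ := h
    exact ⟨x, by simp [hx]⟩
  rw [gameVal_eq G false S, dif_pos h', if_neg (by simp)]
  refine Finset.sup'_le _ _ (fun x _ => ?_)
  exact hb x.1 (by simpa using (Finset.mem_filter.mp x.2).2)

end Helpers

section Cut

variable [Fintype V] {G : SimpleGraph V} {u v : V}

omit [Fintype V] in
lemma cut_adj_inl_inl {a b : V} (h : (cutGraph G u v).Adj (Sum.inl a) (Sum.inl b)) :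
    G.Adj a b := by
  rw [cutGraph, SimpleGraph.fromRel_adj] at h
  rcases h.2 with h' | h'
  · exact h'.1
  · exact h'.1.symm

omit [Fintype V] in
lemma cut_adj_of_adj {a b : V} (hab : G.Adj a b)
    (h1 : ¬ (a = u ∧ b = v)) (h2 : ¬ (a = v ∧ b = u)) :
    (cutGraph G u v).Adj (Sum.inl a) (Sum.inl b) := by
  rw [cutGraph, SimpleGraph.fromRel_adj]
  refine ⟨by simpa using hab.ne, Or.inl ⟨hab, h1, h2⟩⟩

lemma cut_nbr_inr (b : Bool) {z : V ⊕ Bool}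
    (hz : z ∈ closedNbr (cutGraph G u v) (Sum.inr b)) :
    z = Sum.inr b ∨ z = Sum.inl (if b then u else v) := by
  rcases mem_closedNbr.mp hz with h | h
  · exact Or.inl h
  · right
    rw [cutGraph, SimpleGraph.fromRel_adj] at h
    rcases h.2 with h' | h'
    · cases z <;> simp_all
    · cases z with
      | inr c => simp at h'
      | inl a =>
        rcases h' with ⟨hb, ha⟩ | ⟨hb, ha⟩ <;> subst hb <;> simp [ha]

/-- Any legal move in the cut game translates to a legal move in `G`. -/
lemma cut_move_translate {S : Finset V} {T : Finset (V ⊕ Bool)}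
    (hT0 : Sum.inr false ∈ T) (hT1 : Sum.inr true ∈ T)
    (hST : ∀ x ∈ S, Sum.inl x ∈ T) (hu : u ∈ S) (hv : v ∈ S)
    {m : V ⊕ Bool} (hm : ¬ closedNbr (cutGraph G u v) m ⊆ T) :
    ∃ s : V, m = Sum.inl s ∧ ¬ closedNbr G s ⊆ S := by
  obtain ⟨z, hzN, hzT⟩ := Finset.not_subset.mp hm
  cases m with
  | inr b =>
    rcases cut_nbr_inr b hzN with rfl | rfl
    · exact absurd (by cases b <;> assumption) hzT
    · cases b
      · exact absurd (hST _ hv) hzT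
      · exact absurd (hST _ hu) hzT
  | inl s =>
    refine ⟨s, rfl, ?_⟩
    cases z with
    | inr b => exact absurd (by cases b <;> assumption) hzT
    | inl y =>
      have hyS : y ∉ S := fun h => hzT (hST y h)
      rcases mem_closedNbr.mp hzN with h | h
      · have : y = s := by simpa using h
        subst this
        exact Finset.not_subset.mpr ⟨y, mem_closedNbr.mpr (Or.inl rfl), hyS⟩
      · exact Finset.not_subset.mpr
          ⟨y, mem_closedNbr.mpr (Or.inr (cut_adj_inl_inl h)), hyS⟩

/-- The cut-neighborhood of `inl s` together with the old dominated set covers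
the `G`-neighborhood of `s` (image under `inl`). -/
lemma cut_nbr_covers {S : Finset V} {T : Finset (V ⊕ Bool)}
    (hST : ∀ x ∈ S, Sum.inl x ∈ T) (hu : u ∈ S) (hv : v ∈ S) (s : V) :
    ∀ y ∈ closedNbr G s,
      Sum.inl y ∈ T ∨ Sum.inl y ∈ closedNbr (cutGraph G u v) (Sum.inl s) := by
  intro y hy
  rcases mem_closedNbr.mp hy with rfl | h
  · exact Or.inr (mem_closedNbr.mpr (Or.inl rfl))
  · by_cases hc : (s = u ∧ y = v) ∨ (s = v ∧ y = u)
    · rcases hc with ⟨_, rfl⟩ | ⟨_, rfl⟩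
      · exact Or.inl (hST _ hv)
      · exact Or.inl (hST _ hu)
    · rw [not_or] at hc
      exact Or.inr (mem_closedNbr.mpr (Or.inr (cut_adj_of_adj h hc.1 hc.2)))

set_option maxHeartbeats 1000000 in
/-- The key coupling lemma. -/
lemma cut_gameVal_le (G : SimpleGraph V) (u v : V) :
    ∀ n (S : Finset V) (T : Finset (V ⊕ Bool)), (Finset.univ \ S).card ≤ n →
      u ∈ S → v ∈ S → Sum.inr false ∈ T → Sum.inr true ∈ T →
      (∀ x ∈ S, Sum.inl x ∈ T) → ∀ b : Bool,
      gameVal (cutGraph G u v) b T ≤ gameVal G b S := by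
  intro n
  induction n with
  | zero =>
    intro S T hcard hu hv hT0 hT1 hST b
    have hSuniv : S = Finset.univ := by
      have h1 : Finset.univ \ S = ∅ := Finset.card_eq_zero.mp (Nat.le_zero.mp hcard)
      exact le_antisymm (Finset.subset_univ S) (Finset.sdiff_eq_empty_iff_subset.mp h1)
    have hGempty : ∀ x : V, closedNbr G x ⊆ S := by
      intro x; rw [hSuniv]; exact Finset.subset_univ _
    have hcut : ∀ m : V ⊕ Bool, closedNbr (cutGraph G u v) m ⊆ T := by
      intro m
      by_contra hm
      obtain ⟨s, _, hs⟩ := cut_move_translate hT0 hT1 hST hu hv hm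
      exact hs (hGempty s)
    rw [gameVal_of_empty hcut b]
    exact Nat.zero_le _
  | succ n ih =>
    intro S T hcard hu hv hT0 hT1 hST b
    by_cases hG : ∃ x : V, ¬ closedNbr G x ⊆ S
    · by_cases hcut : ∃ m : V ⊕ Bool, ¬ closedNbr (cutGraph G u v) m ⊆ T
      · have inv : ∀ x : V, ¬ closedNbr G x ⊆ S → ∀ T₂ : Finset (V ⊕ Bool),
            Sum.inr false ∈ T₂ → Sum.inr true ∈ T₂ →
            (∀ y : V, (y ∈ S ∨ y ∈ closedNbr G x) → Sum.inl y ∈ T₂) →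
            ∀ b' : Bool, gameVal (cutGraph G u v) b' T₂ ≤
              gameVal G b' (S ∪ closedNbr G x) := by
          intro x hx T₂ h0 h1 hmem b'
          refine ih (S ∪ closedNbr G x) T₂ ?_ (Finset.mem_union_left _ hu)
            (Finset.mem_union_left _ hv) h0 h1 ?_ b'
          · have := card_compl_lt G hx
            omega
          · intro y hy
            exact hmem y (Finset.mem_union.mp hy)
        cases b
        · -- Staller to move
          refine gameVal_false_le (G := cutGraph G u v) hcut (fun m hm => ?_)
          obtain ⟨s, rfl, hs⟩ := cut_move_translate hT0 hT1 hST hu hv hm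
          refine le_trans ?_ (le_gameVal_false hs)
          refine Nat.add_le_add_left ?_ 1
          refine inv s hs _ ?_ ?_ ?_ true
          · simp only [Finset.mem_union]; exact Or.inl hT0
          · simp only [Finset.mem_union]; exact Or.inl hT1
          intro y hy
          simp only [Finset.mem_union]
          rcases hy with hy | hy
          · exact Or.inl (hST y hy)
          · exact cut_nbr_covers hST hu hv s y hy
        · -- Dominator to move
          obtain ⟨x, hx, hxval⟩ := gameVal_true_exists hG
          rw [hxval]
          by_cases hxcut : closedNbr (cutGraph G u v) (Sum.inl x) ⊆ T
          · -- `inl x` has no effect in the cut game: play any legal cut move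
            obtain ⟨m, hm⟩ := hcut
            obtain ⟨s, rfl, _⟩ := cut_move_translate hT0 hT1 hST hu hv hm
            refine le_trans (gameVal_true_le hm) ?_
            refine Nat.add_le_add_left ?_ 1
            refine inv x hx _ ?_ ?_ ?_ false
            · simp only [Finset.mem_union]; exact Or.inl hT0
            · simp only [Finset.mem_union]; exact Or.inl hT1
            intro y hy
            simp only [Finset.mem_union]
            rcases hy with hy | hy
            · exact Or.inl (hST y hy)
            · rcases cut_nbr_covers hST hu hv x y hy with h | h
              · exact Or.inl h
              · exact Or.inl (hxcut h)
          · refine le_trans (gameVal_true_le hxcut) ?_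
            refine Nat.add_le_add_left ?_ 1
            refine inv x hx _ ?_ ?_ ?_ false
            · simp only [Finset.mem_union]; exact Or.inl hT0
            · simp only [Finset.mem_union]; exact Or.inl hT1
            intro y hy
            simp only [Finset.mem_union]
            rcases hy with hy | hy
            · exact Or.inl (hST y hy)
            · exact cut_nbr_covers hST hu hv x y hy
      · push_neg at hcut
        rw [gameVal_of_empty hcut b]
        exact Nat.zero_le _
    · push_neg at hG
      have hcut : ∀ m : V ⊕ Bool, closedNbr (cutGraph G u v) m ⊆ T := by
        intro m
        by_contra hm
        obtain ⟨s, _, hs⟩ := cut_move_translate hT0 hT1 hST hu hv hm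
        exact hs (hG s)
      rw [gameVal_of_empty hcut b]
      exact Nat.zero_le _

end Cut

/-- If `C ⊆ B` and `{u,v} ⊆ C` for an edge `uv` of `G`, then
`γ_g(G_{uv}|B) ≤ γ_g(G|C)` and `γ_g′(G_{uv}|B) ≤ γ_g′(G|C)`. -/
theorem cutting_lemma_II {V : Type*} [Fintype V] [DecidableEq V] (G : SimpleGraph V)
    (u v : V) (huv : G.Adj u v) (B C : Finset V) (hCB : C ⊆ B)
    (hu : u ∈ C) (hv : v ∈ C) :
    gameVal (cutGraph G u v) true (cutDom B) ≤ gameVal G true C ∧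
    gameVal (cutGraph G u v) false (cutDom B) ≤ gameVal G false C := by
  have hT0 : Sum.inr false ∈ cutDom B := by simp [cutDom]
  have hT1 : Sum.inr true ∈ cutDom B := by simp [cutDom]
  have hST : ∀ x ∈ C, Sum.inl x ∈ cutDom B := by
    intro x hx
    exact Finset.mem_union_left _ (Finset.mem_image_of_mem _ (hCB hx))
  exact ⟨cut_gameVal_le G u v _ C (cutDom B) le_rfl hu hv hT0 hT1 hST true,
    cut_gameVal_le G u v _ C (cutDom B) le_rfl hu hv hT0 hT1 hST false⟩

end

end DomGame
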